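/- arXiv:2504.12611 — 2 statements merged into one kernel-verified Lean document; each statement's English description precedes it below -/
import Mathlib

section
/- Existence of false minima for the unbalanced quadratic penalty: there exist a linear objective f, a linear constraint h on {0,1}^n, and penalty coefficients λ_1, λ_2 > 0 such that the minimizer of L_unb(x) = f(x) + λ_1 h(x) + λ_2 h(x)² over {0,1}^n is infeasible (h > 0 at the minimizer) or is not a minimizer of f over the feasible set {x : h(x) ≤ 0}, even though a feasible point exists. -/
/-- existence of false minima for the unbalanced quadratic penalty.
There exist `n`, a linear objective `f(x) = Σ_j α_j x_j + β`, a linear constraint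
`h(x) = Σ_j γ_j x_j − δ`, and penalty coefficients `λ₁, λ₂ > 0`, such that a feasible
point exists but some minimizer of `L_unb(x) = f(x) + λ₁ h(x) + λ₂ h(x)²` over
`{0,1}^n` is infeasible or is not a minimizer of `f` over the feasible set. -/
theorem unbalanced_penalty_false_minimum :
    ∃ (n : ℕ) (α γ : Fin n → ℝ) (β δ lam₁ lam₂ : ℝ),
      lam₁ > 0 ∧ lam₂ > 0 ∧
      (let f : (Fin n → Fin 2) → ℝ := fun x => (∑ j, α j * ((x j : ℕ) : ℝ)) + β
       let h : (Fin n → Fin 2) → ℝ := fun x => (∑ j, γ j * ((x j : ℕ) : ℝ)) - δ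
       let Lunb : (Fin n → Fin 2) → ℝ := fun x => f x + lam₁ * h x + lam₂ * (h x) ^ 2
       (∃ y, h y ≤ 0) ∧
       ∃ x, (∀ y, Lunb x ≤ Lunb y) ∧
         (h x > 0 ∨ ¬(h x ≤ 0 ∧ ∀ y, h y ≤ 0 → f x ≤ f y))) := by
  refine ⟨1, fun _ => -10, fun _ => 1, 0, 0, 1, 1, one_pos, one_pos, ?_, ?_⟩
  · exact ⟨fun _ => 0, by norm_num⟩
  · refine ⟨fun _ => 1, ?_, ?_⟩
    · intro y
      have : (y 0 : ℕ) = 0 ∨ (y 0 : ℕ) = 1 := by omega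
      rcases this with h | h <;> simp [Fin.sum_univ_one, h] <;> norm_num
    · left
      simp [Fin.sum_univ_one]
end

section
/- Minimizing the slack-penalized loss recovers the constrained optimum: let f : {0,1}^n → ℝ, let a_j ≥ 0, b ≥ 0 be integers with 2^N > b, and λ > max f − min f. Then min over (x,y) ∈ {0,1}^n × {0,1}^N of L(x,y) = f(x) + λ (Σ_j a_j x_j + Σ_l 2^l y_l − b)² equals min{ f(x) : Σ_j a_j x_j ≤ b }, provided the feasible set is nonempty, and every minimizing (x,y) has x feasible. -/
lemma slack_bin_encode (N : ℕ) : ∀ s : ℤ, 0 ≤ s → s < 2 ^ N →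
    ∃ y : Fin N → Fin 2, (∑ l : Fin N, (2 : ℤ) ^ (l : ℕ) * ((y l : ℕ) : ℤ)) = s := by
  induction N with
  | zero =>
    intro s h1 h2
    refine ⟨fun l => 0, ?_⟩
    simp only [pow_zero] at h2
    simp [le_antisymm (by linarith) h1]
  | succ N ih =>
    intro s h1 h2
    obtain ⟨y, hy⟩ := ih (s / 2) (Int.ediv_nonneg h1 (by norm_num))
      (by
        rw [Int.ediv_lt_iff_lt_mul (by norm_num)]
        calc s < 2 ^ (N + 1) := h2
        _ = 2 ^ N * 2 := by ring)
    have hmod : s % 2 = 0 ∨ s % 2 = 1 := Int.emod_two_eq_zero_or_one s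
    refine ⟨Fin.cons (if s % 2 = 1 then 1 else 0) y, ?_⟩
    rw [Fin.sum_univ_succ]
    have h0 : ((((if s % 2 = 1 then (1 : Fin 2) else 0) : Fin 2) : ℕ) : ℤ) = s % 2 := by
      rcases hmod with h | h <;> simp [h]
    simp only [Fin.cons_succ, Fin.cons_zero, Fin.val_zero, pow_zero, one_mul]
    have : (∑ i : Fin N, (2 : ℤ) ^ ((i.succ : Fin (N+1)) : ℕ) * ((y i : ℕ) : ℤ))
        = 2 * ∑ l : Fin N, (2 : ℤ) ^ (l : ℕ) * ((y l : ℕ) : ℤ) := by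
      rw [Finset.mul_sum]
      refine Finset.sum_congr rfl fun i _ => ?_
      have : ((i.succ : Fin (N+1)) : ℕ) = (i : ℕ) + 1 := rfl
      rw [this, pow_succ]; ring
    rw [this, hy, h0]
    exact Int.emod_add_mul_ediv s 2

/-- minimizing the slack-penalized loss
`L(x,y) = f(x) + λ (Σ_j a_j x_j + Σ_l 2^l y_l − b)²` recovers the constrained optimum:
with integer `a_j ≥ 0`, `b ≥ 0`, `2^N > b`, `λ > max f − min f`, and a nonempty
feasible set, every minimizer `(x,y)` has `x` feasible, and the minimum of `L` equals
`min { f(x) : Σ_j a_j x_j ≤ b }`. -/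
theorem slack_penalty_recovers_optimum {n N : ℕ} (f : (Fin n → Fin 2) → ℝ)
    (a : Fin n → ℤ) (b : ℤ) (ha : ∀ j, 0 ≤ a j) (hb : 0 ≤ b)
    (hN : (2 : ℤ) ^ N > b) (lam : ℝ)
    (hlam : ∀ x y, lam > f x - f y)
    (hfeas : ∃ x : Fin n → Fin 2, (∑ j, a j * ((x j : ℕ) : ℤ)) ≤ b) :
    let Lsl : (Fin n → Fin 2) × (Fin N → Fin 2) → ℝ := fun p =>
      f p.1 + lam * ((((∑ j, a j * ((p.1 j : ℕ) : ℤ))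
        + (∑ l : Fin N, (2 : ℤ) ^ (l : ℕ) * ((p.2 l : ℕ) : ℤ)) - b : ℤ) : ℝ)) ^ 2
    (∀ p, (∀ q, Lsl p ≤ Lsl q) → (∑ j, a j * ((p.1 j : ℕ) : ℤ)) ≤ b) ∧
    (∃ p, (∀ q, Lsl p ≤ Lsl q) ∧ Lsl p = f p.1 ∧
      (∑ j, a j * ((p.1 j : ℕ) : ℤ)) ≤ b ∧
      ∀ x, (∑ j, a j * ((x j : ℕ) : ℤ)) ≤ b → f p.1 ≤ f x) := by
  intro Lsl
  have hlampos : 0 < lam := by have := hlam (fun _ => 0) (fun _ => 0); linarith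
  have hsumx : ∀ x : Fin n → Fin 2, 0 ≤ ∑ j, a j * ((x j : ℕ) : ℤ) := fun x =>
    Finset.sum_nonneg fun j _ => mul_nonneg (ha j) (Int.natCast_nonneg _)
  have hsumy : ∀ y : Fin N → Fin 2, 0 ≤ ∑ l : Fin N, (2 : ℤ) ^ (l : ℕ) * ((y l : ℕ) : ℤ) :=
    fun y => Finset.sum_nonneg fun l _ => mul_nonneg (by positivity) (Int.natCast_nonneg _)
  -- lower bound for infeasible-slack points
  have hkey : ∀ q : (Fin n → Fin 2) × (Fin N → Fin 2),
      ((∑ j, a j * ((q.1 j : ℕ) : ℤ))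
        + (∑ l : Fin N, (2 : ℤ) ^ (l : ℕ) * ((q.2 l : ℕ) : ℤ)) - b) ≠ 0 →
      f q.1 + lam ≤ Lsl q := by
    intro q ht
    set t : ℤ := (∑ j, a j * ((q.1 j : ℕ) : ℤ))
        + (∑ l : Fin N, (2 : ℤ) ^ (l : ℕ) * ((q.2 l : ℕ) : ℤ)) - b with htdef
    have h1 : (1 : ℤ) ≤ t ^ 2 := by
      have := Int.one_le_abs (by simpa using ht)
      calc (1:ℤ) = 1^2 := by norm_num
      _ ≤ |t|^2 := by exact pow_le_pow_left₀ (by norm_num) this 2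
      _ = t^2 := sq_abs t
    have h1' : (1 : ℝ) ≤ ((t : ℝ)) ^ 2 := by exact_mod_cast (by push_cast at h1 ⊢; exact_mod_cast h1)
    have : lam * 1 ≤ lam * ((t : ℝ)) ^ 2 := by
      exact mul_le_mul_of_nonneg_left h1' (le_of_lt hlampos)
    simp only [Lsl]
    rw [← htdef]
    linarith
  -- optimal feasible x*
  obtain ⟨x0, hx0⟩ := hfeas
  obtain ⟨xs, hxsmem, hxsmin⟩ := Finset.exists_min_image
    (Finset.univ.filter fun x : Fin n → Fin 2 => (∑ j, a j * ((x j : ℕ) : ℤ)) ≤ b) f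
    ⟨x0, by simp [hx0]⟩
  have hxsfeas : (∑ j, a j * ((xs j : ℕ) : ℤ)) ≤ b := (Finset.mem_filter.mp hxsmem).2
  have hxsmin' : ∀ x, (∑ j, a j * ((x j : ℕ) : ℤ)) ≤ b → f xs ≤ f x := fun x hx =>
    hxsmin x (by simp [hx])
  -- slack encoding for x*
  obtain ⟨ys, hys⟩ := slack_bin_encode N (b - ∑ j, a j * ((xs j : ℕ) : ℤ))
    (by linarith) (by have := hsumx xs; linarith)
  have hLxs : Lsl (xs, ys) = f xs := by
    simp only [Lsl]
    have : (∑ j, a j * ((xs j : ℕ) : ℤ))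
        + (∑ l : Fin N, (2 : ℤ) ^ (l : ℕ) * ((ys l : ℕ) : ℤ)) - b = 0 := by
      rw [hys]; ring
    rw [this]; norm_num
  -- (xs, ys) is a global minimizer
  have hmin : ∀ q, Lsl (xs, ys) ≤ Lsl q := by
    intro q
    by_cases ht : ((∑ j, a j * ((q.1 j : ℕ) : ℤ))
        + (∑ l : Fin N, (2 : ℤ) ^ (l : ℕ) * ((q.2 l : ℕ) : ℤ)) - b) = 0
    · have hfq : (∑ j, a j * ((q.1 j : ℕ) : ℤ)) ≤ b := by
        have := hsumy q.2; linarith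
      have hLq : Lsl q = f q.1 := by
        simp only [Lsl, ht]; norm_num
      rw [hLxs, hLq]; exact hxsmin' q.1 hfq
    · have := hkey q ht
      have := hlam xs q.1
      rw [hLxs]; linarith
  refine ⟨?_, ⟨(xs, ys), hmin, hLxs, hxsfeas, hxsmin'⟩⟩
  intro p hp
  by_contra hinf
  push_neg at hinf
  have ht : ((∑ j, a j * ((p.1 j : ℕ) : ℤ))
      + (∑ l : Fin N, (2 : ℤ) ^ (l : ℕ) * ((p.2 l : ℕ) : ℤ)) - b) ≠ 0 := by
    have := hsumy p.2; intro h; omega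
  have h1 := hkey p ht
  have h2 := hp (xs, ys)
  have h3 := hlam xs p.1
  rw [hLxs] at h2
  linarith
end
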